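/- For every object X of I and every n ≥ 1, there exists a unique morphism s̄^X_n : Q^n(X) → Q^{n+1}(X) in A such that s̄^X_n ∘ a^X_n = a^X_{n+1} ∘ s^X_n and ζ^X_{n+1} ∘ F(s̄^X_n) = ρ_X ∘ ζ^X_n. -/

import Mathlib

open CategoryTheory CategoryTheory.Limits

universe v₁ v₂ v₃ u₁ u₂ u₃

variable {I : Type u₁} [Category.{v₁} I] {B : Type u₂} [Category.{v₂} B]

noncomputable section

variable [HasBinaryProducts B] (Dh : I ⥤ B)

/-- `powD Dh X n` is the object `D̂^{n+1}(X)`: thus `powD Dh X 0 = D̂(X)` and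
`powD Dh X (n+1) = D̂(X) ⨯ powD Dh X n`.  (Indices are shifted by one: the paper's
`D̂^n(X)`, `n ≥ 1`, is `powD Dh X (n-1)`.) -/
def powD (X : I) : ℕ → B
  | 0 => Dh.obj X
  | n + 1 => Dh.obj X ⨯ powD X n

/-- `alphaD Dh X n` is `α^X_{n+1} : D̂^{n+1}(X) ⟶ D̂(X)`; `α^X_1` is the identity, and
`α^X_{n+2}` is the first product projection. -/
def alphaD (X : I) : ∀ n : ℕ, powD Dh X n ⟶ Dh.obj X
  | 0 => 𝟙 (Dh.obj X)
  | _ + 1 => prod.fst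

/-- `piD Dh X n` is `π^X_{n+2} : D̂^{n+2}(X) ⟶ D̂^{n+1}(X)`, the second product projection. -/
def piD (X : I) (n : ℕ) : powD Dh X (n + 1) ⟶ powD Dh X n :=
  prod.snd

/-- `powMapD Dh f n` is `D̂^{n+1}(f) : D̂^{n+1}(X) ⟶ D̂^{n+1}(Y)`, i.e. `D̂(f)` for `n = 0`
and the product morphism `D̂(f) ⨯ D̂^{n+1}(f)` afterwards. -/
def powMapD {X Y : I} (f : X ⟶ Y) : ∀ n : ℕ, powD Dh X n ⟶ powD Dh Y n
  | 0 => Dh.map f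
  | n + 1 => prod.map (Dh.map f) (powMapD f n)

variable (D : I ⥤ B) (ε : D ⟶ Dh) (μ : Dh ⟶ D)

/-- `rhoD Dh D ε μ X` is `ρ_X = ε_X ∘ μ_X : D̂(X) ⟶ D̂(X)`. -/
def rhoD (X : I) : Dh.obj X ⟶ Dh.obj X := μ.app X ≫ ε.app X

/-- `sigmaD Dh D ε μ X n` is `σ^X_{n+1} : D̂^{n+1}(X) ⟶ D̂^{n+2}(X)`, the pairing
`⟨ρ_X ∘ α^X_{n+1}, id⟩`. -/
def sigmaD (X : I) (n : ℕ) : powD Dh X n ⟶ powD Dh X (n + 1) :=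
  prod.lift (alphaD Dh X n ≫ rhoD Dh D ε μ X) (𝟙 (powD Dh X n))

end

/-- (Lemma `L:existsbar`.)  For every object `X` of `I` and every
`n ≥ 1` (indices shifted by one, so `n : ℕ` stands for the paper's `n + 1 ≥ 1`), there
exists a unique morphism `s̄^X_n : Q^n(X) ⟶ Q^{n+1}(X)` such that
`s̄^X_n ∘ a^X_n = a^X_{n+1} ∘ s^X_n` and `ζ^X_{n+1} ∘ F(s̄^X_n) = ρ_X ∘ ζ^X_n`. -/
theorem exists_unique_sbar [HasBinaryProducts B] (D Dh : I ⥤ B) (ε : D ⟶ Dh) (μ : Dh ⟶ D)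
    (hretr : ∀ X : I, ε.app X ≫ μ.app X = 𝟙 (D.obj X))
    {A : Type u₃} [Category.{v₃} A] (F : A ⥤ B)
    -- a lifting `E` of the unfolding of the retraction datum with respect to `F`
    -- (indices shifted by one: `E X n` is the paper's `E^{n+1}(X)`):
    (E : I → ℕ → A)
    (s : ∀ (X : I) (n : ℕ), E X n ⟶ E X (n + 1))
    (Emap : ∀ {X Y : I}, (X ⟶ Y) → ∀ n : ℕ, E X n ⟶ E Y n)
    (hEid : ∀ (X : I) (n : ℕ), Emap (𝟙 X) n = 𝟙 (E X n))
    (hEcomp : ∀ {X Y Z : I} (f : X ⟶ Y) (g : Y ⟶ Z) (n : ℕ),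
      Emap (f ≫ g) n = Emap f n ≫ Emap g n)
    (hEs : ∀ {X Y : I} (f : X ⟶ Y) (n : ℕ), s X n ≫ Emap f (n + 1) = Emap f n ≫ s Y n)
    (η : ∀ (X : I) (n : ℕ), F.obj (E X n) ≅ powD Dh X n)
    (hηnat : ∀ {X Y : I} (f : X ⟶ Y) (n : ℕ),
      F.map (Emap f n) ≫ (η Y n).hom = (η X n).hom ≫ powMapD Dh f n)
    (hηs : ∀ (X : I) (n : ℕ),
      F.map (s X n) ≫ (η X (n + 1)).hom = (η X n).hom ≫ sigmaD Dh D ε μ X n)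
    -- projectability witnesses `(a^X_n, ζ^X_n)` for `(α^X_n ∘ η^X_n, E^n(X), D̂(X))`:
    (Q : I → ℕ → A)
    (a : ∀ (X : I) (n : ℕ), E X n ⟶ Q X n)
    (ha : ∀ (X : I) (n : ℕ), Epi (a X n))
    (ζ : ∀ (X : I) (n : ℕ), F.obj (Q X n) ≅ Dh.obj X)
    (hζ : ∀ (X : I) (n : ℕ),
      F.map (a X n) ≫ (ζ X n).hom = (η X n).hom ≫ alphaD Dh X n)
    (hwit : ∀ (X : I) (n : ℕ) {Z : A} (u : E X n ⟶ Z) (θ : F.obj (Q X n) ⟶ F.obj Z),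
      F.map u = F.map (a X n) ≫ θ → ∃ g : Q X n ⟶ Z, u = a X n ≫ g ∧ θ = F.map g)
    (X : I) (n : ℕ) :
    ∃! sb : Q X n ⟶ Q X (n + 1),
      a X n ≫ sb = s X n ≫ a X (n + 1) ∧
      F.map sb ≫ (ζ X (n + 1)).hom = (ζ X n).hom ≫ rhoD Dh D ε μ X := by
  have key : F.map (s X n ≫ a X (n + 1)) =
      F.map (a X n) ≫ ((ζ X n).hom ≫ rhoD Dh D ε μ X ≫ (ζ X (n + 1)).inv) := by
    rw [← cancel_mono (ζ X (n + 1)).hom]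
    have h1 := hζ X (n + 1)
    have h2 := hζ X n
    have h3 := hηs X n
    simp only [F.map_comp, Category.assoc, Iso.inv_hom_id, Category.comp_id]
    rw [h1, ← Category.assoc, h3]
    rw [reassoc_of% h2]
    simp [sigmaD, alphaD]
    exact (Category.assoc _ _ _).trans (congrArg _ (prod.lift_fst _ _))
  obtain ⟨g, hg1, hg2⟩ := hwit X n (s X n ≫ a X (n + 1))
    ((ζ X n).hom ≫ rhoD Dh D ε μ X ≫ (ζ X (n + 1)).inv) key
  refine ⟨g, ⟨hg1.symm, ?_⟩, ?_⟩
  · rw [← hg2]; simp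
  · rintro sb ⟨h1, _⟩
    have := ha X n
    rw [← cancel_epi (a X n), h1, hg1]
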